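/- arXiv:2408.12552 — 6 statements merged into one kernel-verified Lean document; each statement's English description precedes it below -/
import Mathlib

section
/- If T is a contractive linear operator on (K[[x]], d), g ∈ K[[x]] with g(0) = 0, and f ∈ K[[x]], then g(T) is contractive and f(g(T)) = (f ∘ g)(T), where f ∘ g denotes formal composition of power series. -/
open PowerSeries Classical Finset

/-- The order `ω(f)` of a nonzero formal power series: the least `n` with `fₙ ≠ 0`. -/
noncomputable def worder {K : Type*} [Field K] (f : PowerSeries K) : ℕ :=
  sInf {n | PowerSeries.coeff n f ≠ 0}

/-- The distance `d(f,g) = 2^{-ω(f-g)}`, with `d(f,f) = 0`. -/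
noncomputable def wdist {K : Type*} [Field K] (f g : PowerSeries K) : ℝ :=
  if f = g then 0 else (2 : ℝ) ^ (-(worder (f - g) : ℤ))

/-- A self-map of `K[[x]]` is contractive if it is `c`-Lipschitz for `d` for some `c ∈ [0,1)`. -/
def IsContractive {K : Type*} [Field K] (S : PowerSeries K → PowerSeries K) : Prop :=
  ∃ c : ℝ, 0 ≤ c ∧ c < 1 ∧ ∀ f g : PowerSeries K, wdist (S f) (S g) ≤ c * wdist f g

/-- `S = f(T) = Σₙ fₙ Tⁿ`: for every `y`, the partial sums `Σ_{k<n} fₖ Tᵏ(y)` converge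
to `S y` in the metric `d`. -/
def IsOpSeries {K : Type*} [Field K] (f : PowerSeries K)
    (T S : Module.End K (PowerSeries K)) : Prop :=
  ∀ y : PowerSeries K, ∀ ε : ℝ, 0 < ε → ∃ N : ℕ, ∀ n ≥ N,
    wdist (∑ k ∈ Finset.range n, PowerSeries.coeff k f • (T ^ k) y) (S y) < ε

/-- Formal composition `f ∘ g` of power series (meaningful when `g(0) = 0`):
the `m`-th coefficient is `Σ_{n ≤ m} fₙ · [xᵐ](gⁿ)`. -/
noncomputable def pscomp {K : Type*} [Field K] (f g : PowerSeries K) : PowerSeries K :=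
  PowerSeries.mk fun m => ∑ n ∈ Finset.range (m + 1),
    PowerSeries.coeff n f * PowerSeries.coeff m (g ^ n)

namespace OpSeriesAux

variable {K : Type*} [Field K]

/-- Order at least `n`. -/
def Oge (n : ℕ) (h : PowerSeries K) : Prop := ∀ j < n, PowerSeries.coeff j h = 0

lemma oge_mono {m n : ℕ} {h : PowerSeries K} (hmn : m ≤ n) (hh : Oge n h) : Oge m h :=
  fun j hj => hh j (lt_of_lt_of_le hj hmn)

lemma oge_wdist_le {a b : PowerSeries K} {n : ℕ} (h : Oge n (a - b)) :
    wdist a b ≤ (2 : ℝ) ^ (-(n : ℤ)) := by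
  by_cases hab : a = b
  · simp only [wdist, if_pos hab]
    positivity
  · simp only [wdist, if_neg hab]
    have hne : a - b ≠ 0 := sub_ne_zero.mpr hab
    have hnonempty : {m | PowerSeries.coeff m (a - b) ≠ 0}.Nonempty := by
      by_contra hc
      apply hne
      ext m
      simp only [Set.not_nonempty_iff_eq_empty, Set.eq_empty_iff_forall_notMem] at hc
      have := hc m
      simp only [Set.mem_setOf_eq, not_not] at this
      simpa using this
    have hmem := Nat.sInf_mem hnonempty
    have hge : n ≤ worder (a - b) := by
      by_contra hlt
      push_neg at hlt
      exact hmem (h _ hlt)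
    exact zpow_le_zpow_right₀ one_le_two (by omega)

lemma wdist_lt_oge {a b : PowerSeries K} {n : ℕ}
    (h : wdist a b < (2 : ℝ) ^ (-(n : ℤ))) : Oge (n + 1) (a - b) := by
  by_cases hab : a = b
  · intro j _; simp [hab]
  · simp only [wdist, if_neg hab] at h
    have hlt : (-(worder (a - b) : ℤ)) < -(n : ℤ) :=
      (zpow_lt_zpow_iff_right₀ (one_lt_two)).1 h
    intro j hj
    have : j < worder (a - b) := by omega
    have := Nat.notMem_of_lt_sInf (s := {m | PowerSeries.coeff m (a - b) ≠ 0}) this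
    simpa only [Set.mem_setOf_eq, not_not] using this

/-- A linear operator increasing orders by at least one. -/
def StepOp (T : Module.End K (PowerSeries K)) : Prop :=
  ∀ n : ℕ, ∀ z : PowerSeries K, Oge n z → Oge (n + 1) (T z)

lemma step_of_contractive {T : Module.End K (PowerSeries K)}
    (hT : IsContractive (T : PowerSeries K → PowerSeries K)) : StepOp T := by
  intro n z hz
  obtain ⟨c, hc0, hc1, hc⟩ := hT
  have h0 : Oge n (z - 0) := by simpa using hz
  have h1 : wdist z 0 ≤ (2 : ℝ) ^ (-(n : ℤ)) := oge_wdist_le h0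
  have h2 : wdist (T z) (T 0) ≤ c * wdist z 0 := hc z 0
  have h3 : c * wdist z 0 ≤ c * (2 : ℝ) ^ (-(n : ℤ)) := mul_le_mul_of_nonneg_left h1 hc0
  have h4 : c * (2 : ℝ) ^ (-(n : ℤ)) < (2 : ℝ) ^ (-(n : ℤ)) :=
    mul_lt_of_lt_one_left (by positivity) hc1
  have h5 : wdist (T z) (T 0) < (2 : ℝ) ^ (-(n : ℤ)) := lt_of_le_of_lt (h2.trans h3) h4
  have := wdist_lt_oge h5
  simpa using this

lemma step_pow {T : Module.End K (PowerSeries K)} (hT : StepOp T) :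
    ∀ (k n : ℕ) (z : PowerSeries K), Oge n z → Oge (n + k) ((T ^ k) z) := by
  intro k
  induction k with
  | zero => intro n z hz; simpa using hz
  | succ k ih =>
    intro n z hz
    have h1 : Oge (n + 1) (T z) := hT n z hz
    have h2 : Oge (n + 1 + k) ((T ^ k) (T z)) := ih (n + 1) (T z) h1
    have : (T ^ (k + 1)) z = (T ^ k) (T z) := by
      rw [pow_succ, Module.End.mul_apply]
    rw [this]
    exact fun j hj => h2 j (by omega)

lemma oge_pow_apply {T : Module.End K (PowerSeries K)} (hT : StepOp T) (k : ℕ)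
    (y : PowerSeries K) : Oge k ((T ^ k) y) := by
  have := step_pow hT k 0 y (fun j hj => by omega)
  simpa using this

/-- Partial sums `Σ_{k<n} fₖ Tᵏ y`. -/
noncomputable def Pt (f : PowerSeries K) (T : Module.End K (PowerSeries K)) (n : ℕ)
    (y : PowerSeries K) : PowerSeries K :=
  ∑ k ∈ Finset.range n, PowerSeries.coeff k f • (T ^ k) y

lemma coeff_Pt (f : PowerSeries K) (T : Module.End K (PowerSeries K)) (n j : ℕ)
    (y : PowerSeries K) :
    PowerSeries.coeff j (Pt f T n y) =
      ∑ k ∈ Finset.range n, PowerSeries.coeff k f * PowerSeries.coeff j ((T ^ k) y) := by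
  simp [Pt]

lemma Pt_cauchy {T : Module.End K (PowerSeries K)} (hT : StepOp T) (f : PowerSeries K)
    {n m : ℕ} (h : n ≤ m) (y : PowerSeries K) : Oge n (Pt f T m y - Pt f T n y) := by
  intro j hj
  have hsub : Pt f T m y - Pt f T n y
      = ∑ k ∈ Finset.Ico n m, PowerSeries.coeff k f • (T ^ k) y := by
    rw [Pt, Pt, ← Finset.sum_Ico_eq_sub _ h]
  rw [hsub, map_sum]
  apply Finset.sum_eq_zero
  intro k hk
  rw [Finset.mem_Ico] at hk
  rw [map_smul, smul_eq_mul, oge_pow_apply hT k y j (by omega), mul_zero]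

lemma coeff_Pt_stable {T : Module.End K (PowerSeries K)} (hT : StepOp T) (f : PowerSeries K)
    {n m j : ℕ} (hj : j < n) (h : n ≤ m) (y : PowerSeries K) :
    PowerSeries.coeff j (Pt f T m y) = PowerSeries.coeff j (Pt f T n y) := by
  have := Pt_cauchy hT f h y j hj
  rw [map_sub, sub_eq_zero] at this
  exact this

lemma Pt_congr {T : Module.End K (PowerSeries K)} (hT : StepOp T) (f : PowerSeries K)
    {n : ℕ} {z w : PowerSeries K} (h : Oge n (z - w)) (m : ℕ) :
    Oge n (Pt f T m z - Pt f T m w) := by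
  intro j hj
  have hsub : Pt f T m z - Pt f T m w
      = ∑ k ∈ Finset.range m, PowerSeries.coeff k f • (T ^ k) (z - w) := by
    rw [Pt, Pt, ← Finset.sum_sub_distrib]
    refine Finset.sum_congr rfl fun k _ => ?_
    rw [← smul_sub, map_sub]
  rw [hsub, map_sum]
  apply Finset.sum_eq_zero
  intro k _
  rw [map_smul, smul_eq_mul, step_pow hT k n (z - w) h j (by omega), mul_zero]

lemma Pt_eq_aeval (f : PowerSeries K) (T : Module.End K (PowerSeries K)) (n : ℕ)
    (y : PowerSeries K) :
    Pt f T n y = (Polynomial.aeval T (PowerSeries.trunc n f)) y := by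
  induction n with
  | zero => simp [Pt, PowerSeries.trunc_zero']
  | succ n ih =>
    rw [Pt, Finset.sum_range_succ, ← Pt, ih, PowerSeries.trunc_succ, map_add,
      LinearMap.add_apply, Polynomial.aeval_monomial, Algebra.algebraMap_eq_smul_one,
      smul_mul_assoc, one_mul, LinearMap.smul_apply]

lemma coeff_aeval_trunc {T : Module.End K (PowerSeries K)} (hT : StepOp T)
    (p : Polynomial K) (j : ℕ) (y : PowerSeries K) :
    PowerSeries.coeff j ((Polynomial.aeval T p) y) =
      PowerSeries.coeff j
        ((Polynomial.aeval T (PowerSeries.trunc (j + 1) (p : PowerSeries K))) y) := by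
  set q := PowerSeries.trunc (j + 1) (p : PowerSeries K) with hq
  have hdvd : Polynomial.X ^ (j + 1) ∣ (p - q) := by
    rw [Polynomial.X_pow_dvd_iff]
    intro d hd
    rw [Polynomial.coeff_sub, hq, PowerSeries.coeff_trunc, if_pos hd,
      Polynomial.coeff_coe, sub_self]
  obtain ⟨r, hr⟩ := hdvd
  have hdiff : (Polynomial.aeval T p) y - (Polynomial.aeval T q) y
      = (T ^ (j + 1)) ((Polynomial.aeval T r) y) := by
    rw [← LinearMap.sub_apply, ← map_sub, hr, map_mul, map_pow, Polynomial.aeval_X,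
      Module.End.mul_apply]
  have h0 : PowerSeries.coeff j ((Polynomial.aeval T p) y - (Polynomial.aeval T q) y) = 0 := by
    rw [hdiff]
    exact oge_pow_apply hT (j + 1) _ j (by omega)
  rw [map_sub, sub_eq_zero] at h0
  exact h0

lemma isOpSeries_iff {f : PowerSeries K} {T S : Module.End K (PowerSeries K)}
    (hT : StepOp T) :
    IsOpSeries f T S ↔ ∀ y : PowerSeries K, ∀ j : ℕ,
      PowerSeries.coeff j (S y) = PowerSeries.coeff j (Pt f T (j + 1) y) := by
  constructor
  · intro h y j
    obtain ⟨N, hN⟩ := h y ((2 : ℝ) ^ (-((j + 1 : ℕ) : ℤ))) (by positivity)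
    set n := max N (j + 1) with hn
    have h1 := hN n (le_max_left _ _)
    have h2 : Oge (j + 1 + 1) (Pt f T n y - S y) := wdist_lt_oge h1
    have h3 : PowerSeries.coeff j (Pt f T n y) = PowerSeries.coeff j (S y) := by
      have := h2 j (by omega)
      rw [map_sub, sub_eq_zero] at this
      exact this
    rw [← h3, coeff_Pt_stable hT f (by omega) (le_max_right _ _) y]
  · intro h y ε hε
    obtain ⟨N, hN⟩ := exists_pow_lt_of_lt_one hε (by norm_num : (1 : ℝ) / 2 < 1)
    have hN' : (2 : ℝ) ^ (-(N : ℤ)) < ε := by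
      calc (2 : ℝ) ^ (-(N : ℤ)) = ((1 : ℝ) / 2) ^ N := by
            rw [zpow_neg, zpow_natCast, one_div, inv_pow]
        _ < ε := hN
    refine ⟨N, fun n hn => ?_⟩
    have hoge : Oge n (Pt f T n y - S y) := by
      intro j hj
      have h1 : PowerSeries.coeff j (Pt f T n y) = PowerSeries.coeff j (Pt f T (j + 1) y) :=
        coeff_Pt_stable hT f (by omega) (by omega) y
      rw [map_sub, h1, ← h y j, sub_self]
    have h2 : wdist (Pt f T n y) (S y) ≤ (2 : ℝ) ^ (-(n : ℤ)) := oge_wdist_le hoge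
    have h3 : (2 : ℝ) ^ (-(n : ℤ)) ≤ (2 : ℝ) ^ (-(N : ℤ)) :=
      zpow_le_zpow_right₀ one_le_two (by omega)
    exact lt_of_le_of_lt (h2.trans h3) hN'

lemma contractive_of_step {U : Module.End K (PowerSeries K)} (hU : StepOp U) :
    IsContractive (U : PowerSeries K → PowerSeries K) := by
  refine ⟨1 / 2, by norm_num, by norm_num, fun a b => ?_⟩
  by_cases hab : a = b
  · simp [wdist, hab]
  · set n := worder (a - b) with hn
    have hOge : Oge n (a - b) := by
      intro j hj
      have := Nat.notMem_of_lt_sInf (s := {m | PowerSeries.coeff m (a - b) ≠ 0}) hj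
      simpa only [Set.mem_setOf_eq, not_not] using this
    have h1 : Oge (n + 1) (U a - U b) := by
      rw [← map_sub]
      exact hU n (a - b) hOge
    have h2 : wdist (U a) (U b) ≤ (2 : ℝ) ^ (-((n + 1 : ℕ) : ℤ)) := oge_wdist_le h1
    have h3 : ((2 : ℝ)) ^ (-((n + 1 : ℕ) : ℤ)) = 1 / 2 * (2 : ℝ) ^ (-(n : ℤ)) := by
      push_cast
      rw [neg_add, zpow_add₀ (by norm_num : (2 : ℝ) ≠ 0)]
      norm_num
      ring
    have hw : wdist a b = (2 : ℝ) ^ (-(n : ℤ)) := by rw [wdist, if_neg hab]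
    rw [h3, ← hw] at h2
    exact h2

lemma sg_step {T Sg : Module.End K (PowerSeries K)} {g : PowerSeries K} (hT : StepOp T)
    (hg : ∀ y j, PowerSeries.coeff j (Sg y) = PowerSeries.coeff j (Pt g T (j + 1) y))
    (hg0 : PowerSeries.constantCoeff g = 0) : StepOp Sg := by
  intro n z hz j hj
  rw [hg z j, coeff_Pt]
  apply Finset.sum_eq_zero
  intro k hk
  rcases Nat.eq_zero_or_pos k with h0 | hpos
  · subst h0
    rw [PowerSeries.coeff_zero_eq_constantCoeff, hg0, zero_mul]
  · rw [step_pow hT k n z hz j (by omega), mul_zero]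

lemma coeff_pow_eq_zero {g : PowerSeries K} (hg0 : PowerSeries.constantCoeff g = 0)
    {m k : ℕ} (hmk : m < k) : PowerSeries.coeff m (g ^ k) = 0 := by
  have hx : (PowerSeries.X : PowerSeries K) ∣ g := PowerSeries.X_dvd_iff.2 hg0
  have := pow_dvd_pow_of_dvd hx k
  exact PowerSeries.X_pow_dvd_iff.1 this m hmk

lemma pow_char {T Sg : Module.End K (PowerSeries K)} {g : PowerSeries K} (hT : StepOp T)
    (hg : ∀ y j, PowerSeries.coeff j (Sg y) = PowerSeries.coeff j (Pt g T (j + 1) y)) :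
    ∀ (k : ℕ) (y : PowerSeries K) (j : ℕ),
      PowerSeries.coeff j ((Sg ^ k) y) = PowerSeries.coeff j (Pt (g ^ k) T (j + 1) y) := by
  intro k
  induction k with
  | zero =>
    intro y j
    rw [pow_zero, pow_zero, Module.End.one_apply, Pt_eq_aeval, PowerSeries.trunc_one,
      map_one, Module.End.one_apply]
  | succ k ih =>
    intro y j
    have hz : (Sg ^ (k + 1)) y = Sg ((Sg ^ k) y) := by
      rw [pow_succ', Module.End.mul_apply]
    set z := (Sg ^ k) y with hzdef
    set w := Pt (g ^ k) T (j + 1) y with hwdef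
    have hzw : Oge (j + 1) (z - w) := by
      intro j' hj'
      have h1 : PowerSeries.coeff j' z = PowerSeries.coeff j' (Pt (g ^ k) T (j' + 1) y) :=
        ih y j'
      have h2 : PowerSeries.coeff j' w = PowerSeries.coeff j' (Pt (g ^ k) T (j' + 1) y) :=
        coeff_Pt_stable hT (g ^ k) (by omega) (by omega) y
      rw [map_sub, h1, h2, sub_self]
    have step2 : PowerSeries.coeff j (Pt g T (j + 1) z)
        = PowerSeries.coeff j (Pt g T (j + 1) w) := by
      have := Pt_congr hT g hzw (j + 1) j (by omega)
      rw [map_sub, sub_eq_zero] at this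
      exact this
    rw [hz, hg z j, step2]
    -- now `Pt g T (j+1) w` where `w = aeval T (trunc (j+1) (g^k)) y`
    rw [hwdef, Pt_eq_aeval, Pt_eq_aeval, ← Module.End.mul_apply, ← map_mul]
    rw [Pt_eq_aeval]
    have := coeff_aeval_trunc hT
      (PowerSeries.trunc (j + 1) g * PowerSeries.trunc (j + 1) (g ^ k)) j y
    rw [this]
    have hmul : PowerSeries.trunc (j + 1)
          (((PowerSeries.trunc (j + 1) g * PowerSeries.trunc (j + 1) (g ^ k) : Polynomial K))
            : PowerSeries K)
        = PowerSeries.trunc (j + 1) (g ^ (k + 1)) := by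
      rw [Polynomial.coe_mul, PowerSeries.trunc_trunc_mul_trunc, ← pow_succ']
    rw [hmul]

lemma key_identity {T Sg : Module.End K (PowerSeries K)} {f g : PowerSeries K}
    (hT : StepOp T)
    (hg : ∀ y j, PowerSeries.coeff j (Sg y) = PowerSeries.coeff j (Pt g T (j + 1) y))
    (hg0 : PowerSeries.constantCoeff g = 0) (y : PowerSeries K) (j : ℕ) :
    PowerSeries.coeff j (Pt f Sg (j + 1) y)
      = PowerSeries.coeff j (Pt (pscomp f g) T (j + 1) y) := by
  have hpow := pow_char hT hg
  rw [coeff_Pt, coeff_Pt]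
  calc ∑ k ∈ Finset.range (j + 1),
        PowerSeries.coeff k f * PowerSeries.coeff j ((Sg ^ k) y)
      = ∑ k ∈ Finset.range (j + 1), PowerSeries.coeff k f *
          ∑ m ∈ Finset.range (j + 1),
            PowerSeries.coeff m (g ^ k) * PowerSeries.coeff j ((T ^ m) y) := by
        refine Finset.sum_congr rfl fun k _ => ?_
        rw [hpow k y j, coeff_Pt]
    _ = ∑ k ∈ Finset.range (j + 1), ∑ m ∈ Finset.range (j + 1),
          PowerSeries.coeff k f *
            (PowerSeries.coeff m (g ^ k) * PowerSeries.coeff j ((T ^ m) y)) := by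
        exact Finset.sum_congr rfl fun k _ => Finset.mul_sum _ _ _
    _ = ∑ m ∈ Finset.range (j + 1), ∑ k ∈ Finset.range (j + 1),
          PowerSeries.coeff k f *
            (PowerSeries.coeff m (g ^ k) * PowerSeries.coeff j ((T ^ m) y)) :=
        Finset.sum_comm
    _ = ∑ m ∈ Finset.range (j + 1),
          (∑ k ∈ Finset.range (j + 1),
            PowerSeries.coeff k f * PowerSeries.coeff m (g ^ k)) *
          PowerSeries.coeff j ((T ^ m) y) := by
        refine Finset.sum_congr rfl fun m _ => ?_
        rw [Finset.sum_mul]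
        exact Finset.sum_congr rfl fun k _ => by ring
    _ = ∑ m ∈ Finset.range (j + 1),
          PowerSeries.coeff m (pscomp f g) * PowerSeries.coeff j ((T ^ m) y) := by
        refine Finset.sum_congr rfl fun m hm => ?_
        rw [Finset.mem_range] at hm
        congr 1
        rw [pscomp, PowerSeries.coeff_mk]
        refine (Finset.sum_subset (Finset.range_subset_range.2 (by omega)) ?_).symm
        intro k hk hk'
        rw [Finset.mem_range] at hk hk'
        rw [coeff_pow_eq_zero hg0 (by omega), mul_zero]

end OpSeriesAux

open OpSeriesAux in
/-- If `T` is a contractive linear operator on `(K[[x]], d)`,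
`g(0) = 0` and `f ∈ K[[x]]`, then `g(T)` is contractive and `f(g(T)) = (f ∘ g)(T)`:
any `Sg` with `Sg = g(T)` is contractive, and an operator `S` equals `f(Sg)`
iff it equals `(f ∘ g)(T)`. -/
theorem opSeries_subst {K : Type*} [Field K] [CharZero K]
    (f g : PowerSeries K) (T : Module.End K (PowerSeries K))
    (hT : IsContractive (T : PowerSeries K → PowerSeries K))
    (hg0 : PowerSeries.constantCoeff g = 0) :
    ∀ Sg : Module.End K (PowerSeries K), IsOpSeries g T Sg →
      IsContractive (Sg : PowerSeries K → PowerSeries K) ∧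
        ∀ S : Module.End K (PowerSeries K),
          (IsOpSeries f Sg S ↔ IsOpSeries (pscomp f g) T S) := by
  intro Sg hSg
  have hTs : StepOp T := step_of_contractive hT
  have hg : ∀ y j, PowerSeries.coeff j (Sg y) = PowerSeries.coeff j (Pt g T (j + 1) y) :=
    (isOpSeries_iff hTs).1 hSg
  have hSgs : StepOp Sg := sg_step hTs hg hg0
  refine ⟨contractive_of_step hSgs, fun S => ?_⟩
  rw [isOpSeries_iff hSgs, isOpSeries_iff hTs]
  constructor
  · intro h y j
    rw [h y j]
    exact key_identity hTs hg hg0 y j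
  · intro h y j
    rw [h y j]
    exact (key_identity hTs hg hg0 y j).symm
end

section
/- Let G : K[[x]] → K[[x]] be non-expansive with respect to the ultrametric d and y₀ ∈ K. Then the initial value problem D_h(y) = G(y), y(0) = y₀ has a unique solution y ∈ K[[x]]; moreover y is the unique fixed point of the map F(f) = y₀ + I_h(G(f)), which is 1/2-contractive. -/
open PowerSeries Classical Finset

/-- The Ward `h`-derivative: `D_h(Σ sₖxᵏ) = Σ_{k≥1} hₖ sₖ x^{k-1}`. -/
noncomputable def Dh {K : Type*} [Field K] (h s : PowerSeries K) : PowerSeries K :=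
  PowerSeries.mk fun k =>
    PowerSeries.coeff (k + 1) h * PowerSeries.coeff (k + 1) s

/-- The Ward `h`-integral: `I_h(Σ sₖxᵏ) = Σ_{k≥0} (sₖ/h_{k+1}) x^{k+1}`. -/
noncomputable def Ih {K : Type*} [Field K] (h s : PowerSeries K) : PowerSeries K :=
  PowerSeries.mk fun k =>
    if k = 0 then 0 else PowerSeries.coeff (k - 1) s / PowerSeries.coeff k h

section AuxLemmas

variable {K : Type*} [Field K]

lemma wdist_nonneg' (f g : PowerSeries K) : 0 ≤ wdist f g := by
  unfold wdist; split
  · exact le_refl 0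
  · positivity

lemma wdist_pos' (f g : PowerSeries K) (hfg : f ≠ g) : 0 < wdist f g := by
  unfold wdist; rw [if_neg hfg]; positivity

lemma exists_coeff_ne (f g : PowerSeries K) (hfg : f ≠ g) :
    ∃ n, PowerSeries.coeff n (f - g) ≠ 0 := by
  by_contra hc
  push_neg at hc
  apply hfg
  ext n
  simpa [sub_eq_zero] using hc n

lemma agree_imp_wdist_le (f g : PowerSeries K) (n : ℕ)
    (hag : ∀ j < n, PowerSeries.coeff j f = PowerSeries.coeff j g) :
    wdist f g ≤ (2 : ℝ) ^ (-(n : ℤ)) := by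
  unfold wdist
  split
  · positivity
  · rename_i hfg
    have hn : (n : ℤ) ≤ (worder (f - g) : ℤ) := by
      have : n ≤ worder (f - g) := by
        apply le_csInf (exists_coeff_ne f g hfg)
        intro b hb
        by_contra hlt
        push_neg at hlt
        exact hb (by simpa [sub_eq_zero] using hag b hlt)
      exact_mod_cast this
    exact (zpow_le_zpow_iff_right₀ one_lt_two).mpr (by omega)

lemma wdist_le_imp_agree (f g : PowerSeries K) (n : ℕ)
    (hle : wdist f g ≤ (2 : ℝ) ^ (-(n : ℤ))) :
    ∀ j < n, PowerSeries.coeff j f = PowerSeries.coeff j g := by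
  intro j hj
  by_cases hfg : f = g
  · rw [hfg]
  · rw [wdist, if_neg hfg] at hle
    have hn : (n : ℤ) ≤ (worder (f - g) : ℤ) := by
      have := (zpow_le_zpow_iff_right₀ (one_lt_two (α := ℝ))).mp hle
      omega
    have hj' : j < worder (f - g) := by
      have : (n : ℕ) ≤ worder (f - g) := by exact_mod_cast hn
      omega
    have := Nat.notMem_of_lt_sInf hj'
    simp only [Set.mem_setOf_eq, not_not] at this
    rw [map_sub, sub_eq_zero] at this
    exact this
    
lemma coeff_F_zero (h s : PowerSeries K) (y₀ : K) :
    PowerSeries.coeff 0 (PowerSeries.C y₀ + Ih h s) = y₀ := by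
  simp [Ih, PowerSeries.coeff_mk]

lemma coeff_F_succ (h s : PowerSeries K) (y₀ : K) (k : ℕ) :
    PowerSeries.coeff (k + 1) (PowerSeries.C y₀ + Ih h s) =
      PowerSeries.coeff k s / PowerSeries.coeff (k + 1) h := by
  simp [Ih, PowerSeries.coeff_mk, PowerSeries.coeff_C]

/-- The core contraction estimate. -/
lemma contraction_aux (h : PowerSeries K) (y₀ : K) (s t : PowerSeries K) :
    wdist (PowerSeries.C y₀ + Ih h s) (PowerSeries.C y₀ + Ih h t) ≤
      (1 / 2) * wdist s t := by
  by_cases hst : s = t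
  · rw [hst]
    have : wdist (PowerSeries.C y₀ + Ih h t) (PowerSeries.C y₀ + Ih h t) = 0 := by
      simp [wdist]
    rw [this]
    have := wdist_nonneg' t t
    linarith
  · set ω := worder (s - t) with hω
    have hag : ∀ j < ω + 1,
        PowerSeries.coeff j (PowerSeries.C y₀ + Ih h s) =
          PowerSeries.coeff j (PowerSeries.C y₀ + Ih h t) := by
      intro j hj
      match j with
      | 0 => rw [coeff_F_zero, coeff_F_zero]
      | m + 1 =>
        rw [coeff_F_succ, coeff_F_succ]
        have hm : m < ω := by omega
        have := Nat.notMem_of_lt_sInf hm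
        simp only [Set.mem_setOf_eq, not_not] at this
        rw [map_sub, sub_eq_zero] at this
        rw [this]
    have h1 := agree_imp_wdist_le _ _ (ω + 1) hag
    have h2 : ((2 : ℝ)) ^ (-((ω + 1 : ℕ) : ℤ)) = (1 / 2) * (2 : ℝ) ^ (-(ω : ℤ)) := by
      push_cast
      rw [neg_add, zpow_add₀ (by norm_num : (2:ℝ) ≠ 0)]
      norm_num
      ring
    have h3 : wdist s t = (2 : ℝ) ^ (-(ω : ℤ)) := by rw [wdist, if_neg hst]
    rw [h3]
    calc wdist (PowerSeries.C y₀ + Ih h s) (PowerSeries.C y₀ + Ih h t)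
        ≤ (2 : ℝ) ^ (-((ω + 1 : ℕ) : ℤ)) := h1
      _ = (1 / 2) * (2 : ℝ) ^ (-(ω : ℤ)) := h2

/-- The IVP ↔ fixed-point equivalence. -/
lemma ivp_iff_fixed (h : PowerSeries K)
    (hne : ∀ k : ℕ, 1 ≤ k → PowerSeries.coeff k h ≠ 0)
    (y g : PowerSeries K) (y₀ : K) :
    (Dh h y = g ∧ PowerSeries.constantCoeff y = y₀) ↔
      PowerSeries.C y₀ + Ih h g = y := by
  constructor
  · rintro ⟨hD, hc⟩
    ext k
    match k with
    | 0 =>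
      rw [coeff_F_zero]
      rw [← hc]
      simp [PowerSeries.coeff_zero_eq_constantCoeff]
    | m + 1 =>
      rw [coeff_F_succ, ← hD]
      have : PowerSeries.coeff m (Dh h y) =
          PowerSeries.coeff (m + 1) h * PowerSeries.coeff (m + 1) y := by
        simp [Dh, PowerSeries.coeff_mk]
      rw [this, mul_div_cancel_left₀ _ (hne (m + 1) (by omega))]
  · intro hfix
    constructor
    · ext m
      have hc : PowerSeries.coeff (m + 1) y = PowerSeries.coeff m g /
          PowerSeries.coeff (m + 1) h := by
        rw [← hfix, coeff_F_succ]
      have : PowerSeries.coeff m (Dh h y) =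
          PowerSeries.coeff (m + 1) h * PowerSeries.coeff (m + 1) y := by
        simp [Dh, PowerSeries.coeff_mk]
      rw [this, hc, mul_div_cancel₀ _ (hne (m + 1) (by omega))]
    · rw [← hfix]
      have := coeff_F_zero h g y₀
      simpa [PowerSeries.coeff_zero_eq_constantCoeff] using this

end AuxLemmas

/-- If `G : K[[x]] → K[[x]]` is non-expansive for `d` and `y₀ ∈ K`,
then the IVP `D_h(y) = G(y)`, `y(0) = y₀` has a unique solution `y ∈ K[[x]]`; moreover
the solutions of the IVP are exactly the fixed points of `F(f) = y₀ + I_h(G(f))`,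
and `F` is `1/2`-contractive. -/
theorem ivp_unique_solution {K : Type*} [Field K] [CharZero K]
    (h : PowerSeries K)
    (h0 : PowerSeries.constantCoeff h = 0)
    (hne : ∀ k : ℕ, 1 ≤ k → PowerSeries.coeff k h ≠ 0)
    (G : PowerSeries K → PowerSeries K)
    (hG : ∀ f g : PowerSeries K, wdist (G f) (G g) ≤ wdist f g)
    (y₀ : K) :
    (∃! y : PowerSeries K, Dh h y = G y ∧ PowerSeries.constantCoeff y = y₀) ∧
    (∀ y : PowerSeries K,
      (Dh h y = G y ∧ PowerSeries.constantCoeff y = y₀) ↔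
        PowerSeries.C y₀ + Ih h (G y) = y) ∧
    (∀ f g : PowerSeries K,
      wdist (PowerSeries.C y₀ + Ih h (G f)) (PowerSeries.C y₀ + Ih h (G g)) ≤
        (1 / 2) * wdist f g) := by
  set F : PowerSeries K → PowerSeries K := fun f => PowerSeries.C y₀ + Ih h (G f) with hF
  -- the contraction property
  have hcontr : ∀ f g : PowerSeries K, wdist (F f) (F g) ≤ (1 / 2) * wdist f g := by
    intro f g
    calc wdist (F f) (F g) ≤ (1 / 2) * wdist (G f) (G g) := contraction_aux h y₀ _ _
      _ ≤ (1 / 2) * wdist f g := by linarith [hG f g]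
  -- one step of F preserves (and extends) coefficient agreement
  have hstep : ∀ (n : ℕ) (f g : PowerSeries K),
      (∀ j < n, PowerSeries.coeff j f = PowerSeries.coeff j g) →
      ∀ j < n + 1, PowerSeries.coeff j (F f) = PowerSeries.coeff j (F g) := by
    intro n f g hag
    have h1 : wdist f g ≤ (2 : ℝ) ^ (-(n : ℤ)) := agree_imp_wdist_le f g n hag
    have h2 : wdist (G f) (G g) ≤ (2 : ℝ) ^ (-(n : ℤ)) := le_trans (hG f g) h1
    have h3 := wdist_le_imp_agree _ _ n h2
    intro j hj
    match j with
    | 0 => rw [hF]; simp only; rw [coeff_F_zero, coeff_F_zero]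
    | m + 1 =>
      rw [hF]; simp only; rw [coeff_F_succ, coeff_F_succ, h3 m (by omega)]
  -- coefficients of iterates stabilize
  have hstab : ∀ (m : ℕ), ∀ j < m,
      PowerSeries.coeff j (F^[m] 0) = PowerSeries.coeff j (F^[m + 1] 0) := by
    intro m
    induction m with
    | zero => intro j hj; omega
    | succ m ih =>
      rw [Function.iterate_succ_apply', Function.iterate_succ_apply' (n := m + 1)]
      exact hstep m (F^[m] 0) (F^[m + 1] 0) ih
  have hstab2 : ∀ (j m : ℕ), j < m →
      PowerSeries.coeff j (F^[m] 0) = PowerSeries.coeff j (F^[j + 1] 0) := by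
    intro j m hjm
    induction m with
    | zero => omega
    | succ m ih =>
      rcases Nat.lt_or_ge j m with hlt | hge
      · rw [← hstab m j hlt]; exact ih hlt
      · have : j = m := by omega
        subst this
        rfl
  -- the fixed point
  set y : PowerSeries K := PowerSeries.mk
      (fun j => PowerSeries.coeff j (F^[j + 1] 0)) with hy
  have hyc : ∀ j : ℕ, PowerSeries.coeff j y = PowerSeries.coeff j (F^[j + 1] 0) := by
    intro j; rw [hy, PowerSeries.coeff_mk]
  have hfix : F y = y := by
    ext k
    have hag : ∀ j < k + 1,
        PowerSeries.coeff j y = PowerSeries.coeff j (F^[k + 1] 0) := by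
      intro j hj
      rw [hyc j, hstab2 j (k + 1) hj]
    have := hstep (k + 1) y (F^[k + 1] 0) hag k (by omega)
    rw [this, ← Function.iterate_succ_apply' F (k + 1) 0]
    rw [← hstab (k + 1) k (by omega), ← hyc k]
  -- assemble
  have hiff : ∀ z : PowerSeries K,
      (Dh h z = G z ∧ PowerSeries.constantCoeff z = y₀) ↔ F z = z := by
    intro z
    exact ivp_iff_fixed h hne z (G z) y₀
  refine ⟨⟨y, (hiff y).mpr hfix, ?_⟩, hiff, fun f g => hcontr f g⟩
  intro z hz
  have hfz : F z = z := (hiff z).mp hz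
  by_contra hzy
  have hd := hcontr z y
  rw [hfz, hfix] at hd
  have := wdist_pos' z y hzy
  linarith
end

section
/- Let T : K[[x]] → K[[x]] be a non-expansive K-linear endomorphism and q ∈ K[[x]], y₀ ∈ K. Then the unique solution of the IVP D_h(y) = T(y) + q, y(0) = y₀, is y = (Σ_{n≥0} (I_h ∘ T)ⁿ)(y₀ + I_h(q)), where the operator series converges in the operator ultrametric. -/
open PowerSeries Classical Finset

lemma wdist_le_of_coeff_eq {K : Type*} [Field K] {f g : PowerSeries K} {n : ℕ}
    (hc : ∀ i < n, coeff i f = coeff i g) :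
    wdist f g ≤ (2:ℝ) ^ (-(n:ℤ)) := by
  unfold wdist
  split
  · positivity
  · rename_i hfg
    apply zpow_le_zpow_right₀ (by norm_num)
    simp only [neg_le_neg_iff, Int.ofNat_le]
    have hne : {m | coeff m (f - g) ≠ 0}.Nonempty := by
      by_contra hh
      apply hfg
      apply sub_eq_zero.mp
      ext m
      rw [Set.not_nonempty_iff_eq_empty] at hh
      have := Set.eq_empty_iff_forall_notMem.mp hh m
      simpa using this
    apply le_csInf hne
    intro m hm
    by_contra hlt
    exact hm (by rw [map_sub, hc m (by omega), sub_self])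

lemma coeff_eq_of_wdist_le {K : Type*} [Field K] {f g : PowerSeries K} {n : ℕ}
    (hd : wdist f g ≤ (2:ℝ) ^ (-(n:ℤ))) :
    ∀ i < n, coeff i f = coeff i g := by
  intro i hi
  unfold wdist at hd
  split at hd
  · rename_i hfg; rw [hfg]
  · have hle : -(worder (f-g) : ℤ) ≤ -(n:ℤ) :=
      (zpow_le_zpow_iff_right₀ (by norm_num : (1:ℝ) < 2)).mp hd
    have hn : n ≤ worder (f - g) := by omega
    have : coeff i (f - g) = 0 := by
      by_contra hc
      have : worder (f - g) ≤ i := Nat.sInf_le hc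
      omega
    rw [map_sub, sub_eq_zero] at this
    exact this

/-- Let `T` be a non-expansive `K`-linear endomorphism of `K[[x]]`,
`q ∈ K[[x]]`, `y₀ ∈ K`. The IVP `D_h(y) = T(y) + q`, `y(0) = y₀` has a unique solution,
namely `y = (Σ_{n≥0} (I_h ∘ T)ⁿ)(y₀ + I_h(q))`: the partial sums
`Σ_{k<n} (I_h ∘ T)ᵏ (y₀ + I_h(q))` converge to `y` in the ultrametric `d`
(the geometric operator series converges since `I_h ∘ T` is `1/2`-contractive). -/
theorem ivp_linear_geometric_series {K : Type*} [Field K] [CharZero K]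
    (h : PowerSeries K)
    (h0 : PowerSeries.constantCoeff h = 0)
    (hne : ∀ k : ℕ, 1 ≤ k → PowerSeries.coeff k h ≠ 0)
    (T : Module.End K (PowerSeries K))
    (hT : ∀ f g : PowerSeries K, wdist (T f) (T g) ≤ wdist f g)
    (q : PowerSeries K) (y₀ : K) :
    ∃ y : PowerSeries K,
      (Dh h y = T y + q ∧ PowerSeries.constantCoeff y = y₀) ∧
      (∀ z : PowerSeries K,
        (Dh h z = T z + q ∧ PowerSeries.constantCoeff z = y₀) → z = y) ∧
      (∀ ε : ℝ, 0 < ε → ∃ N : ℕ, ∀ n ≥ N,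
        wdist (∑ k ∈ Finset.range n,
            (fun z => Ih h (T z))^[k] (PowerSeries.C y₀ + Ih h q)) y < ε) := by
  classical
  set Φ : PowerSeries K → PowerSeries K :=
    fun z => PowerSeries.C y₀ + Ih h q + Ih h (T z) with hΦ
  -- locality of T
  have hTloc : ∀ (n : ℕ) (f g : PowerSeries K), (∀ i < n, coeff i f = coeff i g) →
      ∀ i < n, coeff i (T f) = coeff i (T g) := fun n f g hc =>
    coeff_eq_of_wdist_le (le_trans (hT f g) (wdist_le_of_coeff_eq hc))
  have hIh0 : ∀ s : PowerSeries K, coeff 0 (Ih h s) = 0 := by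
    intro s; simp [Ih]
  have hIhsucc : ∀ (s : PowerSeries K) (k : ℕ),
      coeff (k+1) (Ih h s) = coeff k s / coeff (k+1) h := by
    intro s k; simp [Ih]
  have hΦ0 : ∀ z, coeff 0 (Φ z) = y₀ := by
    intro z
    simp [hΦ, map_add, hIh0, coeff_zero_eq_constantCoeff]
  have hΦsucc : ∀ z k, coeff (k+1) (Φ z) =
      (coeff k q + coeff k (T z)) / coeff (k+1) h := by
    intro z k
    simp only [hΦ, map_add, hIhsucc, coeff_C, Nat.succ_ne_zero, if_false, add_div]
    ring
  have hΦloc : ∀ (n : ℕ) (f g : PowerSeries K), (∀ i < n, coeff i f = coeff i g) →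
      ∀ i < n + 1, coeff i (Φ f) = coeff i (Φ g) := by
    intro n f g hc i hi
    cases i with
    | zero => rw [hΦ0, hΦ0]
    | succ k => rw [hΦsucc, hΦsucc, hTloc n f g hc k (by omega)]
  have hiter : ∀ (n m : ℕ), ∀ i < n, coeff i (Φ^[n] 0) = coeff i (Φ^[n+m] 0) := by
    intro n
    induction n with
    | zero => intro m i hi; omega
    | succ n ih =>
      intro m i hi
      rw [Function.iterate_succ_apply', show n+1+m = (n+m)+1 by ring,
        Function.iterate_succ_apply']
      exact hΦloc n _ _ (fun j hj => ih m j hj) i hi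
  set y : PowerSeries K := PowerSeries.mk (fun n => coeff n (Φ^[n+1] 0)) with hy
  have hCy : ∀ n, ∀ i < n, coeff i (Φ^[n] 0) = coeff i y := by
    intro n i hi
    rw [hy, coeff_mk]
    have := hiter (i+1) (n - (i+1)) i (by omega)
    rw [show i+1 + (n - (i+1)) = n by omega] at this
    exact this.symm
  have hfix : Φ y = y := by
    ext n
    have h2 : Φ (Φ^[n] 0) = Φ^[n+1] 0 := (Function.iterate_succ_apply' Φ n 0).symm
    rw [← hΦloc n (Φ^[n] 0) y (hCy n) n (by omega), h2, hy, coeff_mk]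
  have hsol : Dh h y = T y + q ∧ PowerSeries.constantCoeff y = y₀ := by
    constructor
    · ext k
      have hyk : coeff (k+1) y = (coeff k q + coeff k (T y)) / coeff (k+1) h := by
        have := hΦsucc y k
        rwa [hfix] at this
      have hk : coeff (k+1) h ≠ 0 := hne (k+1) (by omega)
      simp only [Dh, coeff_mk, hyk, map_add]
      field_simp
      ring
    · rw [← coeff_zero_eq_constantCoeff, ← hfix, hΦ0]
  have hfixuniq : ∀ z : PowerSeries K, Φ z = z → z = y := by
    intro z hz
    have H : ∀ n, ∀ i < n, coeff i z = coeff i y := by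
      intro n
      induction n with
      | zero => intro i hi; omega
      | succ n ih =>
        intro i hi
        calc coeff i z = coeff i (Φ z) := by rw [hz]
          _ = coeff i (Φ y) := hΦloc n z y ih i hi
          _ = coeff i y := by rw [hfix]
    ext n
    exact H (n+1) n (by omega)
  refine ⟨y, hsol, ?_, ?_⟩
  · -- uniqueness
    intro z ⟨hz1, hz2⟩
    apply hfixuniq
    ext n
    cases n with
    | zero => rw [hΦ0, coeff_zero_eq_constantCoeff, hz2]
    | succ k =>
      rw [hΦsucc]
      have hk : coeff (k+1) h ≠ 0 := hne (k+1) (by omega)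
      have : coeff k (Dh h z) = coeff k (T z + q) := by rw [hz1]
      simp only [Dh, coeff_mk, map_add] at this
      rw [add_comm ((coeff k) q), ← this, mul_div_cancel_left₀ _ hk]
  · -- convergence
    have hIhadd : ∀ a b : PowerSeries K, Ih h (a + b) = Ih h a + Ih h b := by
      intro a b
      ext n
      simp only [Ih, map_add, coeff_mk]
      split
      · simp
      · exact add_div _ _ _
    have hIhzero : Ih h (0 : PowerSeries K) = 0 := by
      ext n
      simp [Ih]
    set Φ₀ : PowerSeries K → PowerSeries K := fun z => Ih h (T z) with hΦ₀
    set w : PowerSeries K := PowerSeries.C y₀ + Ih h q with hw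
    set S : ℕ → PowerSeries K := fun n => ∑ k ∈ Finset.range n, Φ₀^[k] w with hSdef
    have hΦeq : ∀ z, Φ z = w + Φ₀ z := fun z => rfl
    have hΦ₀add : ∀ a b, Φ₀ (a + b) = Φ₀ a + Φ₀ b := by
      intro a b; simp only [hΦ₀, map_add, hIhadd]
    have hstep : ∀ n, Φ (S n) = S (n+1) := by
      intro n
      induction n with
      | zero =>
        have hS0 : S 0 = 0 := by simp [hSdef]
        have hS1 : S 1 = w := by simp [hSdef]
        rw [hS0, hS1]
        show w + Ih h (T 0) = w
        rw [map_zero, hIhzero, add_zero]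
      | succ n ih =>
        have h1 : S (n+1) = S n + Φ₀^[n] w := by simp only [hSdef, Finset.sum_range_succ]
        have h2 : S (n+1+1) = S (n+1) + Φ₀^[n+1] w := by
          simp only [hSdef, Finset.sum_range_succ]
        have h3 : Φ₀ (Φ₀^[n] w) = Φ₀^[n+1] w := (Function.iterate_succ_apply' Φ₀ n w).symm
        rw [h1, hΦeq, hΦ₀add, ← add_assoc, ← hΦeq (S n), ih, h3, ← h2]
    have hSiter : ∀ n, S n = Φ^[n] 0 := by
      intro n
      induction n with
      | zero => simp [hSdef]
      | succ n ih => rw [← hstep n, ih, Function.iterate_succ_apply']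
    have hbound : ∀ n, wdist (S n) y ≤ (2:ℝ) ^ (-(n:ℤ)) := by
      intro n
      rw [hSiter]
      exact wdist_le_of_coeff_eq (hCy n)
    intro ε hε
    obtain ⟨N, hN⟩ := exists_pow_lt_of_lt_one hε (by norm_num : (1/2:ℝ) < 1)
    refine ⟨N, fun n hn => ?_⟩
    calc wdist (S n) y ≤ (2:ℝ) ^ (-(n:ℤ)) := hbound n
      _ ≤ (2:ℝ) ^ (-(N:ℤ)) := by
          apply zpow_le_zpow_right₀ (by norm_num)
          omega
      _ = (1/2:ℝ) ^ N := by
          rw [zpow_neg, zpow_natCast, one_div, inv_pow]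
      _ < ε := hN
end

section
/- For any positive integer s and any formal power series y ∈ K[[x]], the derivative associated to h_s(x) = x/(1-x)^s satisfies D_{h_s}(y) = Σ_{k=0}^{s-1} binom(s-1,k) (x^k/k!) (D₀(y))^{(k)}, where (·)^{(k)} denotes the k-th usual derivative. -/
open PowerSeries Classical Finset

/-- The 0-Jackson derivative: `D₀(Σ sₖxᵏ) = Σ_{k≥1} sₖ x^{k-1}`. -/
noncomputable def D0 {K : Type*} [Field K] (s : PowerSeries K) : PowerSeries K :=
  PowerSeries.mk fun k => PowerSeries.coeff (k + 1) s

lemma inv_one_sub_eq_val {K : Type*} [Field K] :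
    ((1 - PowerSeries.X : PowerSeries K)⁻¹) = (PowerSeries.invOneSubPow K 1).val := by
  rw [PowerSeries.inv_eq_iff_mul_eq_one]
  · have h := (PowerSeries.invOneSubPow K 1).inv_val
    rw [PowerSeries.invOneSubPow_inv_eq_one_sub_pow, pow_one] at h
    rw [mul_comm]
    exact h
  · simp

lemma inv_one_sub_pow_coeff {K : Type*} [Field K] (t n : ℕ) :
    PowerSeries.coeff n (((1 - PowerSeries.X : PowerSeries K)⁻¹) ^ (t + 1)) =
      ((t + n).choose t : K) := by
  rw [inv_one_sub_eq_val, ← Units.val_pow_eq_pow_val]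
  have : (PowerSeries.invOneSubPow K 1) ^ (t + 1) = PowerSeries.invOneSubPow K (t + 1) := by
    rw [PowerSeries.invOneSubPow_eq_inv_one_sub_pow, PowerSeries.invOneSubPow_eq_inv_one_sub_pow,
      ← pow_mul, one_mul]
  rw [this, PowerSeries.invOneSubPow_val_succ_eq_mk_add_choose, PowerSeries.coeff_mk]

lemma coeff_iter_deriv {K : Type*} [Field K] (f : PowerSeries K) :
    ∀ (k n : ℕ), PowerSeries.coeff n (PowerSeries.derivativeFun^[k] f) =
      ((n + k).descFactorial k : K) * PowerSeries.coeff (n + k) f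
  | 0, n => by simp
  | k + 1, n => by
    rw [Function.iterate_succ_apply', (show PowerSeries.coeff n (PowerSeries.derivativeFun^[k] f).derivativeFun =
        PowerSeries.coeff (n + 1) (PowerSeries.derivativeFun^[k] f) * (n + 1) from
        PowerSeries.coeff_derivative _ _),
      coeff_iter_deriv f k (n + 1)]
    have h1 : n + 1 + k = n + (k + 1) := by omega
    have h2 : (n + (k + 1)).descFactorial (k + 1) =
        (n + 1) * (n + 1 + k).descFactorial k := by
      rw [Nat.descFactorial_succ, h1]
      congr 1
      omega
    rw [h1, h2]
    push_cast
    ring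

lemma vander (t n : ℕ) :
    ∑ k ∈ Finset.range (t + 1), t.choose k * n.choose k = (t + n).choose t := by
  have e1 : ∑ k ∈ Finset.range (t + 1), t.choose k * n.choose k =
      ∑ k ∈ Finset.range (t + n + 1), t.choose k * n.choose k := by
    apply Finset.sum_subset
    · exact Finset.range_subset_range.2 (by omega)
    · intro k _ hk
      simp only [Finset.mem_range, not_lt] at hk
      rw [Nat.choose_eq_zero_of_lt (by omega), zero_mul]
  have e2 : ∑ k ∈ Finset.range (n + 1), t.choose k * n.choose k =
      ∑ k ∈ Finset.range (t + n + 1), t.choose k * n.choose k := by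
    apply Finset.sum_subset
    · exact Finset.range_subset_range.2 (by omega)
    · intro k _ hk
      simp only [Finset.mem_range, not_lt] at hk
      rw [Nat.choose_eq_zero_of_lt (show n < k by omega), mul_zero]
  rw [e1, ← e2]
  have := Nat.add_choose_eq t n n
  rw [Finset.Nat.sum_antidiagonal_eq_sum_range_succ_mk] at this
  rw [Nat.choose_symm_add, this]
  apply Finset.sum_congr rfl
  intro k hk
  simp only [Finset.mem_range] at hk
  rw [Nat.choose_symm (by omega)]

/-- For any positive integer `s` and any `y ∈ K[[x]]`, the derivative
associated to `h_s(x) = x/(1-x)^s` satisfies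
`D_{h_s}(y) = Σ_{k=0}^{s-1} C(s-1,k) (xᵏ/k!) (D₀(y))⁽ᵏ⁾`,
where `⁽ᵏ⁾` is the `k`-th usual derivative. -/
theorem Dh_pascal_column {K : Type*} [Field K] [CharZero K]
    (s : ℕ) (hs : 1 ≤ s) (y : PowerSeries K) :
    Dh (PowerSeries.X * ((1 - PowerSeries.X : PowerSeries K)⁻¹) ^ s) y =
      ∑ k ∈ Finset.range s,
        (((s - 1).choose k : K) / (k.factorial : K)) •
          (PowerSeries.X ^ k * PowerSeries.derivativeFun^[k] (D0 y)) := by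
  obtain ⟨t, rfl⟩ : ∃ t, s = t + 1 := ⟨s - 1, by omega⟩
  ext n
  rw [Dh, PowerSeries.coeff_mk, PowerSeries.coeff_succ_X_mul, inv_one_sub_pow_coeff,
    map_sum]
  have hterm : ∀ k ∈ Finset.range (t + 1),
      PowerSeries.coeff n
        ((((t + 1 - 1).choose k : K) / (k.factorial : K)) •
          (PowerSeries.X ^ k * PowerSeries.derivativeFun^[k] (D0 y))) =
        ((t.choose k * n.choose k : ℕ) : K) * PowerSeries.coeff (n + 1) y := by
    intro k _
    rw [PowerSeries.coeff_smul, PowerSeries.coeff_X_pow_mul', smul_eq_mul]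
    simp only [Nat.add_sub_cancel]
    by_cases hkn : k ≤ n
    · rw [if_pos hkn, coeff_iter_deriv, Nat.sub_add_cancel hkn, D0, PowerSeries.coeff_mk]
      rw [Nat.descFactorial_eq_factorial_mul_choose]
      have hfac : (k.factorial : K) ≠ 0 := Nat.cast_ne_zero.2 k.factorial_ne_zero
      push_cast
      field_simp
    · rw [if_neg hkn, mul_zero, Nat.choose_eq_zero_of_lt (show n < k by omega)]
      push_cast
      ring
  rw [Finset.sum_congr rfl hterm, ← Finset.sum_mul, ← Nat.cast_sum, vander]
end

section
/- For any integer s ≥ 2 and any formal power series y ∈ K[[x]], D_{h_s}(y) = Σ_{k=1}^{s-1} (1/k!) binom(s-2,k-1) x^{k-1} y^{(k)}, where y^{(k)} is the k-th usual derivative of y. -/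
open PowerSeries Classical Finset

lemma coeff_iter_derivativeFun {K : Type*} [Field K] (y : PowerSeries K) (k : ℕ) :
    ∀ n, PowerSeries.coeff n (PowerSeries.derivativeFun^[k] y) =
      ((n + 1).ascFactorial k : K) * PowerSeries.coeff (n + k) y := by
  induction k with
  | zero => intro n; simp
  | succ k ih =>
    intro n
    rw [Function.iterate_succ_apply', show ∀ f : PowerSeries K, f.derivativeFun = PowerSeries.derivative K f from fun _ => rfl, PowerSeries.coeff_derivative, ih (n + 1)]
    have h : (n + 1).ascFactorial (k + 1) = (n + 1) * (n + 1 + 1).ascFactorial k := by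
      rw [Nat.ascFactorial_succ, ← Nat.succ_ascFactorial]
    have h3 : n + 1 + k = n + (k + 1) := by omega
    rw [h, h3]
    push_cast
    ring

lemma vander_aux (s n : ℕ) (hs : 2 ≤ s) :
    ∑ k ∈ Finset.Icc 1 (s - 1), (s - 2).choose (k - 1) * (n + 1).choose k
      = (s - 1 + n).choose (s - 1) := by
  have h1 : s - 1 + n = (n + 1) + (s - 2) := by omega
  rw [h1, Nat.add_choose_eq, Finset.Nat.sum_antidiagonal_eq_sum_range_succ_mk]
  have h2 : (s - 1).succ = s := by omega
  rw [h2, Finset.range_eq_Ico, Finset.sum_eq_sum_Ico_succ_bot (by omega : 0 < s)]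
  have h3 : (s - 2).choose (s - 1 - 0) = 0 := Nat.choose_eq_zero_of_lt (by omega)
  rw [h3, mul_zero, zero_add]
  have h4 : Finset.Ico 1 s = Finset.Icc 1 (s - 1) := by
    rw [← Finset.Ico_add_one_right_eq_Icc, Nat.sub_add_cancel (by omega : 1 ≤ s)]
  rw [h4]
  apply Finset.sum_congr rfl
  intro k hk
  simp only [Finset.mem_Icc] at hk
  have h5 : s - 1 - k = (s - 2) - (k - 1) := by omega
  rw [h5, Nat.choose_symm (by omega), mul_comm]

lemma coeff_inv_one_sub_pow {K : Type*} [Field K] (s : ℕ) (hs : 0 < s) (m : ℕ) :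
    PowerSeries.coeff m (((1 - PowerSeries.X : PowerSeries K)⁻¹) ^ s)
      = ((s - 1 + m).choose (s - 1) : K) := by
  have hinv : ((1 - PowerSeries.X : PowerSeries K)⁻¹) = (invOneSubPow K 1).val := by
    symm
    rw [PowerSeries.eq_inv_iff_mul_eq_one (by simp)]
    have h := (invOneSubPow K 1).val_inv
    rwa [invOneSubPow_inv_eq_one_sub_pow, pow_one] at h
  have hpow : invOneSubPow K s = (invOneSubPow K 1) ^ s := by
    rw [invOneSubPow_eq_inv_one_sub_pow, invOneSubPow_eq_inv_one_sub_pow, pow_one]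
  rw [hinv, ← Units.val_pow_eq_pow_val, ← hpow,
    invOneSubPow_val_eq_mk_sub_one_add_choose_of_pos K s hs, PowerSeries.coeff_mk]

/-- For any integer `s ≥ 2` and any `y ∈ K[[x]]`,
`D_{h_s}(y) = Σ_{k=1}^{s-1} (1/k!) C(s-2,k-1) x^{k-1} y⁽ᵏ⁾`, where `h_s(x) = x/(1-x)^s`
and `y⁽ᵏ⁾` is the `k`-th usual derivative of `y`. -/
theorem Dh_pascal_column_finite {K : Type*} [Field K] [CharZero K]
    (s : ℕ) (hs : 2 ≤ s) (y : PowerSeries K) :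
    Dh (PowerSeries.X * ((1 - PowerSeries.X : PowerSeries K)⁻¹) ^ s) y =
      ∑ k ∈ Finset.Icc 1 (s - 1),
        ((1 : K) / (k.factorial : K) * ((s - 2).choose (k - 1) : K)) •
          (PowerSeries.X ^ (k - 1) * PowerSeries.derivativeFun^[k] y) := by
  ext n
  rw [Dh, PowerSeries.coeff_mk, PowerSeries.coeff_succ_X_mul,
    coeff_inv_one_sub_pow s (by omega) n, map_sum]
  have hstep : ∀ k ∈ Finset.Icc 1 (s - 1),
      PowerSeries.coeff n
        (((1 : K) / (k.factorial : K) * ((s - 2).choose (k - 1) : K)) •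
          (PowerSeries.X ^ (k - 1) * PowerSeries.derivativeFun^[k] y))
      = ((s - 2).choose (k - 1) : K) * ((n + 1).choose k : K)
          * PowerSeries.coeff (n + 1) y := by
    intro k hk
    simp only [Finset.mem_Icc] at hk
    rw [PowerSeries.coeff_smul, smul_eq_mul, PowerSeries.coeff_X_pow_mul']
    by_cases h : k - 1 ≤ n
    · rw [if_pos h, coeff_iter_derivativeFun]
      have h1 : n - (k - 1) + k = n + 1 := by omega
      rw [Nat.ascFactorial_eq_factorial_mul_choose, h1]
      have hf : (k.factorial : K) ≠ 0 := Nat.cast_ne_zero.mpr k.factorial_ne_zero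
      push_cast
      field_simp
    · rw [if_neg h]
      have h2 : ((n + 1).choose k : K) = 0 := by
        rw [Nat.choose_eq_zero_of_lt (by omega)]; exact Nat.cast_zero
      rw [h2]
      ring
  rw [Finset.sum_congr rfl hstep, ← Finset.sum_mul]
  congr 1
  rw [← vander_aux s n hs]
  push_cast
  rfl
end

section
/- Sheffer expansion coefficients for Ward derivatives: let h = Σ_{k≥1} hₖxᵏ with hₖ ≠ 0 for all k ≥ 1, and define Lₖʰ by D_h(y) = Σ_{j≥1} Lⱼʰ(x) y^{(j)} for all y (where y^{(j)} is the usual j-th derivative). Then Lₖʰ(x) = (x^{k-1}/k!) Σ_{j=0}^{k} (−1)^{k+j} binom(k,j) hⱼ for all k ≥ 1 (with h₀ = 0). Equivalently, D_h(xⁿ) evaluated via this expansion gives hₙx^{n−1}: hₙ x^{n-1} = Σ_{j=1}^{n} binom(n,j) j! Lⱼʰ(x) x^{n−j}. -/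
open PowerSeries Finset


open Finset

section aux
variable {K : Type*} [Field K] [CharZero K]

lemma invSum (n i : ℕ) (hi : i ≤ n) :
    (∑ j ∈ Icc i n, (-1:K)^(j+i) * (n.choose j : K) * (j.choose i : K))
      = if i = n then 1 else 0 := by
  rw [← Finset.Ico_add_one_right_eq_Icc, Finset.sum_Ico_eq_sum_range]
  have hcongr : ∀ m ∈ Finset.range (n + 1 - i),
      (-1:K)^(i+m+i) * (n.choose (i+m) : K) * ((i+m).choose i : K)
      = (n.choose i : K) * ((-1:K)^m * ((n-i).choose m : K)) := by
    intro m hm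
    rw [Finset.mem_range] at hm
    have h1 : (n.choose (i+m)) * ((i+m).choose i) = n.choose i * ((n-i).choose m) := by
      have := Nat.choose_mul (n := n) (k := i+m) (s := i) (Nat.le_add_right _ _)
      simpa using this
    have hpow : (-1:K)^(i+m+i) = (-1:K)^m := by
      rw [show i+m+i = m + 2*i by ring, pow_add, pow_mul]
      simp
    rw [hpow]
    have := congrArg (Nat.cast : ℕ → K) h1
    push_cast at this
    rw [show (-1:K)^m * (↑(n.choose (i+m))) * (↑((i+m).choose i))
        = (-1:K)^m * ((↑(n.choose (i+m))) * (↑((i+m).choose i))) by ring, this]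
    ring
  rw [Finset.sum_congr rfl hcongr, ← Finset.mul_sum]
  have halt : (∑ m ∈ Finset.range (n - i + 1), (-1:K)^m * ((n-i).choose m : K))
      = if n - i = 0 then 1 else 0 := by
    have h2 := congrArg (Int.cast : ℤ → K) (Int.alternating_sum_range_choose (n := n - i))
    push_cast at h2
    convert h2 using 2

  rw [show n + 1 - i = n - i + 1 by omega, halt]
  rcases eq_or_ne i n with rfl | hne
  · simp
  · rw [if_neg (by omega), if_neg hne, mul_zero]

lemma scalar_rec (h : ℕ → K) (h0 : h 0 = 0) (n : ℕ) (hn : 1 ≤ n) :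
    (∑ j ∈ Icc 1 n, (n.choose j : K) *
        (∑ i ∈ Finset.range (j+1), (-1:K)^(j+i) * (j.choose i : K) * h i)) = h n := by
  set F : ℕ → ℕ → K := fun j i => (-1:K)^(j+i) * (n.choose j : K) * (j.choose i : K) * h i
    with hF
  have step1 : (∑ j ∈ Icc 1 n, (n.choose j : K) *
        (∑ i ∈ Finset.range (j+1), (-1:K)^(j+i) * (j.choose i : K) * h i))
      = ∑ j ∈ Finset.range (n+1), ∑ i ∈ Finset.range (j+1), F j i := by
    rw [Finset.sum_range_succ' (fun j => ∑ i ∈ Finset.range (j+1), F j i) n]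
    have hz : (∑ i ∈ Finset.range (0+1), F 0 i) = 0 := by
      simp [hF, h0]
    rw [hz, add_zero]
    rw [show Icc 1 n = Ico 1 (n+1) by rw [Finset.Ico_add_one_right_eq_Icc], Finset.sum_Ico_eq_sum_range]
    refine Finset.sum_congr rfl fun j hj => ?_
    rw [Finset.mul_sum]
    refine Finset.sum_congr (by rw [Nat.add_comm 1 j]) fun i hi => ?_
    simp only [hF]
    rw [Nat.add_comm 1 j]
    ring
  have step2 : (∑ j ∈ Finset.range (n+1), ∑ i ∈ Finset.range (j+1), F j i)
      = ∑ i ∈ Finset.range (n+1), ∑ j ∈ Icc i n, F j i := by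
    refine Finset.sum_comm' ?_
    intro j i
    simp only [Finset.mem_range, Finset.mem_Icc]
    omega
  rw [step1, step2]
  have step3 : ∀ i ∈ Finset.range (n+1),
      (∑ j ∈ Icc i n, F j i) = (if i = n then 1 else 0) * h i := by
    intro i hi
    rw [Finset.mem_range] at hi
    calc (∑ j ∈ Icc i n, F j i)
        = (∑ j ∈ Icc i n, (-1:K)^(j+i) * (n.choose j : K) * (j.choose i : K)) * h i := by
          rw [Finset.sum_mul]
      _ = (if i = n then 1 else 0) * h i := by rw [invSum n i (by omega)]
  rw [Finset.sum_congr rfl step3]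
  simp
end aux

/-- **Sheffer expansion coefficients for Ward derivatives.**
Let `h = Σ_{k≥1} hₖxᵏ` with `h₀ = 0` and `hₖ ≠ 0` for `k ≥ 1`, and let the `Lₖ` be
the Sheffer coefficients of `D_h`, i.e. the (unique) power series such that
`D_h(y) = Σ_{j≥1} Lⱼ(x) y⁽ʲ⁾`; equivalently, evaluating on `y = xⁿ`, the `Lⱼ`
satisfy `hₙ x^{n-1} = Σ_{j=1}^{n} C(n,j) j! Lⱼ(x) x^{n-j}` for all `n ≥ 1`.
Then `Lₖ(x) = (x^{k-1}/k!) Σ_{j=0}^{k} (-1)^{k+j} C(k,j) hⱼ` for all `k ≥ 1`. -/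
theorem sheffer_coefficients {K : Type*} [Field K] [CharZero K]
    (h : ℕ → K) (h0 : h 0 = 0) (hne : ∀ k : ℕ, 1 ≤ k → h k ≠ 0)
    (L : ℕ → PowerSeries K)
    (hL : ∀ n : ℕ, 1 ≤ n →
      (h n) • (PowerSeries.X ^ (n - 1) : PowerSeries K) =
        ∑ j ∈ Finset.Icc 1 n,
          ((n.choose j * j.factorial : ℕ) : K) • (L j * PowerSeries.X ^ (n - j))) :
    ∀ k : ℕ, 1 ≤ k →
      L k = ((k.factorial : K))⁻¹ •
        ((∑ j ∈ Finset.range (k + 1), (-1 : K) ^ (k + j) * (k.choose j : K) * h j) •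
          (PowerSeries.X ^ (k - 1) : PowerSeries K)) := by

  intro k
  induction k using Nat.strong_induction_on with
  | _ k IH =>
    intro hk
    obtain ⟨m, rfl⟩ : ∃ m, k = m + 1 := ⟨k - 1, by omega⟩
    have hrec := hL (m+1) (by omega)
    rw [Finset.sum_Icc_succ_top (by omega : 1 ≤ m + 1)] at hrec
    have hterm : ((( m+1).choose (m+1) * (m+1).factorial : ℕ) : K) •
        (L (m+1) * PowerSeries.X ^ (m + 1 - (m+1))) = (((m+1).factorial : K)) • L (m+1) := by
      rw [Nat.choose_self, one_mul, Nat.sub_self, pow_zero, mul_one]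
    rw [hterm] at hrec
    have hsum : (∑ j ∈ Finset.Icc 1 m,
          (((m+1).choose j * j.factorial : ℕ) : K) • (L j * PowerSeries.X ^ (m + 1 - j)))
        = (∑ j ∈ Finset.Icc 1 m, ((m+1).choose j : K) *
            (∑ i ∈ Finset.range (j + 1), (-1 : K) ^ (j + i) * (j.choose i : K) * h i)) •
          (PowerSeries.X ^ m : PowerSeries K) := by
      rw [Finset.sum_smul]
      refine Finset.sum_congr rfl fun j hj => ?_
      rw [Finset.mem_Icc] at hj
      rw [IH j (by omega) (by omega)]
      have hfac : ((j.factorial : K)) ≠ 0 := Nat.cast_ne_zero.mpr j.factorial_ne_zero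
      have hxp : (PowerSeries.X ^ (j-1) : PowerSeries K) * PowerSeries.X ^ (m+1-j)
          = PowerSeries.X ^ m := by
        rw [← pow_add]; congr 1; omega
      rw [smul_smul, smul_mul_assoc, hxp, smul_smul]
      congr 1
      push_cast
      have hc : (↑j.factorial : K) * (↑j.factorial : K)⁻¹ = 1 := mul_inv_cancel₀ hfac
      rw [mul_assoc, ← mul_assoc (↑j.factorial : K), hc, one_mul]
    rw [hsum] at hrec
    have hscal : (∑ j ∈ Finset.Icc 1 m, ((m+1).choose j : K) *
            (∑ i ∈ Finset.range (j + 1), (-1 : K) ^ (j + i) * (j.choose i : K) * h i))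
        = h (m+1) - (∑ i ∈ Finset.range (m + 1 + 1), (-1 : K) ^ (m + 1 + i) * ((m+1).choose i : K) * h i) := by
      have hs := scalar_rec h h0 (m+1) (by omega)
      rw [Finset.sum_Icc_succ_top (by omega : 1 ≤ m + 1), Nat.choose_self] at hs
      push_cast at hs
      linear_combination hs
    rw [hscal, sub_smul] at hrec
    have hkey : (((m+1).factorial : K)) • L (m+1)
        = (∑ i ∈ Finset.range (m + 1 + 1), (-1 : K) ^ (m + 1 + i) * ((m+1).choose i : K) * h i) •
          (PowerSeries.X ^ m : PowerSeries K) := by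
      have h2 := hrec
      rw [Nat.add_sub_cancel, sub_add_eq_add_sub, eq_sub_iff_add_eq] at h2
      exact (add_left_cancel h2).symm
    have hfacne : (((m+1).factorial : K)) ≠ 0 := Nat.cast_ne_zero.mpr (m+1).factorial_ne_zero
    rw [show m + 1 - 1 = m from rfl]
    rw [← hkey, smul_smul, inv_mul_cancel₀ hfacne, one_smul]
end
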